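/- (Classical form of the surplus-multiplicity lower bound.) Let k be an algebraically closed field that is complete with respect to a nontrivial non-Archimedean absolute value, with ring of integers 𝒪 = {x ∈ k : |x| ≤ 1}, residue field k̃, and coefficientwise reduction map π : 𝒪[X] → k̃[X]. Let f, g ∈ 𝒪[X] be polynomials that are coprime in k[X] and whose reductions π(f), π(g) are linearly independent over k̃, and let H be a greatest common divisor of π(f) and π(g) in k̃[X]. Then for every y ∈ k and every a ∈ 𝒪, the polynomial f − y·g is nonzero and the number of its roots x with |x − a| < 1, counted with multiplicity, is at least the root multiplicity of the residue of a as a root of H. -/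

import Mathlib

open Polynomial

variable (k : Type*) [NontriviallyNormedField k] [IsUltrametricDist k]

/-- The ring of integers `𝒪 = {x ∈ k : ‖x‖ ≤ 1}` of a non-Archimedean normed field. -/
def ringOfIntegers : Subring k where
  carrier := {x : k | ‖x‖ ≤ 1}
  mul_mem' := fun {a b} ha hb => by
    simp only [Set.mem_setOf_eq] at *
    calc ‖a * b‖ = ‖a‖ * ‖b‖ := norm_mul a b
    _ ≤ 1 := mul_le_one₀ ha (norm_nonneg b) hb
  one_mem' := by simp
  add_mem' := fun {a b} ha hb => by
    simp only [Set.mem_setOf_eq] at *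
    exact le_trans (IsUltrametricDist.norm_add_le_max a b) (max_le ha hb)
  zero_mem' := by simp
  neg_mem' := fun {a} ha => by simpa using ha

/-- The maximal ideal `{x ∈ 𝒪 : ‖x‖ < 1}` of the ring of integers. -/
def maxIdeal : Ideal (ringOfIntegers k) where
  carrier := {x | ‖(x : k)‖ < 1}
  add_mem' := fun {a b} ha hb => by
    simp only [Set.mem_setOf_eq] at *
    exact lt_of_le_of_lt (IsUltrametricDist.norm_add_le_max (a : k) (b : k)) (max_lt ha hb)
  zero_mem' := by simp
  smul_mem' := fun c x hx => by
    simp only [Set.mem_setOf_eq] at *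
    calc ‖((c • x : ringOfIntegers k) : k)‖ = ‖(c : k)‖ * ‖(x : k)‖ := norm_mul _ _
    _ ≤ 1 * ‖(x : k)‖ := by gcongr; exact c.2
    _ < 1 := by simpa using hx

/-- The residue field `k̃ = 𝒪 / {‖x‖ < 1}`. -/
abbrev residueField := (ringOfIntegers k) ⧸ (maxIdeal k)

/-- Coefficientwise reduction map `π : 𝒪[X] → k̃[X]`. -/
noncomputable def redPoly (h : Polynomial (ringOfIntegers k)) : Polynomial (residueField k) :=
  h.map (Ideal.Quotient.mk (maxIdeal k))

/-- Inclusion `𝒪[X] → k[X]`. -/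
noncomputable def toPoly (h : Polynomial (ringOfIntegers k)) : Polynomial k :=
  h.map (ringOfIntegers k).subtype


section Aux

variable {k}

lemma norm_multiset_sum_le_aux {C : ℝ} (hC : 0 ≤ C) (s : Multiset k)
    (h : ∀ x ∈ s, ‖x‖ ≤ C) : ‖s.sum‖ ≤ C := by
  induction s using Multiset.induction_on with
  | empty => simpa using hC
  | cons a t ih =>
    rw [Multiset.sum_cons]
    refine le_trans (IsUltrametricDist.norm_add_le_max _ _) (max_le ?_ ?_)
    · exact h a (Multiset.mem_cons_self a t)
    · exact ih fun x hx => h x (Multiset.mem_cons_of_mem hx)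

lemma norm_multiset_prod_aux (s : Multiset k) :
    ‖s.prod‖ = (s.map (fun x => ‖x‖)).prod := by
  induction s using Multiset.induction_on with
  | empty => simp
  | cons a t ih => simp [norm_mul, ih]

lemma prod_le_prod_of_le_aux {s t : Multiset k} (hst : s ≤ t)
    (h : ∀ x ∈ t, 1 ≤ ‖x‖) :
    (s.map (fun x => ‖x‖)).prod ≤ (t.map (fun x => ‖x‖)).prod := by
  obtain ⟨u, rfl⟩ := Multiset.le_iff_exists_add.mp hst
  rw [Multiset.map_add, Multiset.prod_add]
  have hs : (0:ℝ) ≤ (s.map (fun x => ‖x‖)).prod :=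
    Multiset.prod_nonneg (by
      intro r hr; obtain ⟨x, _, rfl⟩ := Multiset.mem_map.mp hr; exact norm_nonneg x)
  have hu : (1:ℝ) ≤ (u.map (fun x => ‖x‖)).prod :=
    Multiset.one_le_prod (by
      intro r hr; obtain ⟨x, hx, rfl⟩ := Multiset.mem_map.mp hr
      exact h x (Multiset.mem_add.mpr (Or.inr hx)))
  nlinarith

/-- If a nonzero polynomial over an algebraically closed field has no roots in the open
unit disk, then all its coefficients are bounded in norm by its constant coefficient. -/
lemma coeff_norm_le_of_no_small_root [IsAlgClosed k] {p : Polynomial k} (hp : p ≠ 0)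
    (hroots : ∀ z ∈ p.roots, 1 ≤ ‖z‖) (n : ℕ) : ‖p.coeff n‖ ≤ ‖p.coeff 0‖ := by
  have hcard : Multiset.card p.roots = p.natDegree :=
    (Polynomial.splits_iff_card_roots).mp (IsAlgClosed.splits p)
  set P : ℝ := (p.roots.map (fun x => ‖x‖)).prod with hP
  have hP1 : (1:ℝ) ≤ P :=
    Multiset.one_le_prod (by
      intro r hr; obtain ⟨x, hx, rfl⟩ := Multiset.mem_map.mp hr; exact hroots x hx)
  have hP0 : (0:ℝ) ≤ P := le_trans zero_le_one hP1
  have h0 : ‖p.coeff 0‖ = ‖p.leadingCoeff‖ * P := by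
    rw [Polynomial.coeff_zero_eq_eval_zero]
    conv_lhs => rw [← Polynomial.C_leadingCoeff_mul_prod_multiset_X_sub_C hcard]
    rw [Polynomial.eval_mul, Polynomial.eval_C, norm_mul, Polynomial.eval_multiset_prod]
    congr 1
    rw [Multiset.map_map, norm_multiset_prod_aux, Multiset.map_map]
    congr 1
    apply Multiset.map_congr rfl
    intro x _
    simp [norm_neg]
  rcases le_or_gt n p.natDegree with hn | hn
  · rw [Polynomial.coeff_eq_esymm_roots_of_card hcard hn, h0]
    rw [norm_mul, norm_mul, norm_pow, norm_neg, norm_one, one_pow, mul_one]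
    refine mul_le_mul_of_nonneg_left ?_ (norm_nonneg _)
    unfold Multiset.esymm
    refine norm_multiset_sum_le_aux hP0 _ ?_
    intro r hr
    obtain ⟨T, hT, rfl⟩ := Multiset.mem_map.mp hr
    obtain ⟨hTle, -⟩ := Multiset.mem_powersetCard.mp hT
    rw [norm_multiset_prod_aux]
    exact le_trans (prod_le_prod_of_le_aux hTle hroots) (le_of_eq rfl)
  · rw [Polynomial.coeff_eq_zero_of_natDegree_lt hn, norm_zero, h0]
    positivity

end Aux

section OAux

lemma mk_eq_zero_iff_aux (x : ringOfIntegers k) :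
    Ideal.Quotient.mk (maxIdeal k) x = 0 ↔ ‖(x:k)‖ < 1 := by
  rw [Ideal.Quotient.eq_zero_iff_mem]
  rfl

lemma toPoly_coeff_aux (h : Polynomial (ringOfIntegers k)) (n : ℕ) :
    (toPoly k h).coeff n = ((h.coeff n : ringOfIntegers k) : k) :=
  Polynomial.coeff_map _ _

lemma redPoly_coeff_aux (h : Polynomial (ringOfIntegers k)) (n : ℕ) :
    (redPoly k h).coeff n = Ideal.Quotient.mk (maxIdeal k) (h.coeff n) :=
  Polynomial.coeff_map _ _

lemma toPoly_injective_aux : Function.Injective (toPoly k) :=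
  Polynomial.map_injective _ Subtype.coe_injective

lemma toPoly_ne_zero_aux {h : Polynomial (ringOfIntegers k)} (hne : redPoly k h ≠ 0) :
    toPoly k h ≠ 0 := by
  intro H
  apply hne
  have : h = 0 := toPoly_injective_aux k (by simpa [toPoly] using H)
  simp [this, redPoly]

/-- Root lifting: if the reduction of `h` is nonzero and has `ã` as a root, then `h` has a
root within distance `< 1` of `a`. -/
lemma exists_root_lt_aux [IsAlgClosed k] (h : Polynomial (ringOfIntegers k))
    (hne : redPoly k h ≠ 0) (a : ringOfIntegers k)
    (hroot : (redPoly k h).IsRoot (Ideal.Quotient.mk (maxIdeal k) a)) :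
    ∃ x, (toPoly k h).IsRoot x ∧ ‖x - (a:k)‖ < 1 := by
  classical
  set q : Polynomial (ringOfIntegers k) := Polynomial.taylor a h with hq
  have hqred : redPoly k q = Polynomial.taylor (Ideal.Quotient.mk (maxIdeal k) a)
      (redPoly k h) := by
    rw [hq, Polynomial.taylor_apply, Polynomial.taylor_apply]
    show ((h.comp _).map _) = (h.map _).comp _
    rw [Polynomial.map_comp]
    simp
  have hqto : toPoly k q = Polynomial.taylor (a:k) (toPoly k h) := by
    rw [hq, Polynomial.taylor_apply, Polynomial.taylor_apply]
    show ((h.comp _).map _) = (h.map _).comp _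
    rw [Polynomial.map_comp]
    simp
  have hqne : redPoly k q ≠ 0 := by
    intro H
    apply hne
    have := congrArg (Polynomial.taylor (-(Ideal.Quotient.mk (maxIdeal k) a))) (hqred.symm.trans H)
    rwa [Polynomial.taylor_taylor, neg_add_cancel, Polynomial.taylor_zero, map_zero] at this
  have hq0 : ‖((q.coeff 0 : ringOfIntegers k) : k)‖ < 1 := by
    rw [← mk_eq_zero_iff_aux]
    have : (redPoly k q).coeff 0 = 0 := by
      rw [hqred, Polynomial.taylor_coeff_zero]
      exact hroot
    rwa [redPoly_coeff_aux] at this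
  obtain ⟨n, hn⟩ : ∃ n, (redPoly k q).coeff n ≠ 0 := by
    by_contra hcon
    push_neg at hcon
    exact hqne (Polynomial.ext fun n => by simp [hcon n])
  have hn' : ¬ ‖((q.coeff n : ringOfIntegers k) : k)‖ < 1 := by
    rw [← mk_eq_zero_iff_aux]
    rwa [redPoly_coeff_aux] at hn
  set p : Polynomial k := toPoly k q with hp
  have hpne : p ≠ 0 := toPoly_ne_zero_aux k hqne
  by_cases hex : ∃ z ∈ p.roots, ‖z‖ < 1
  · obtain ⟨z, hz, hz1⟩ := hex
    refine ⟨z + (a:k), ?_, by simpa using hz1⟩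
    have hzr : p.IsRoot z := (Polynomial.mem_roots hpne).mp hz
    rw [Polynomial.IsRoot, hqto, Polynomial.taylor_eval] at hzr
    exact hzr
  · exfalso
    push_neg at hex
    have hb := coeff_norm_le_of_no_small_root hpne hex n
    rw [hp, toPoly_coeff_aux, toPoly_coeff_aux] at hb
    exact hn' (lt_of_le_of_lt hb hq0)

/-- Core counting lemma: the number of roots of `h` within distance `< 1` of `a` is at least
the multiplicity of `ã` as a root of the reduction of `h`. -/
lemma core_count_aux [IsAlgClosed k] (n : ℕ) :
    ∀ (h : Polynomial (ringOfIntegers k)), redPoly k h ≠ 0 →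
    ∀ a : ringOfIntegers k,
      rootMultiplicity (Ideal.Quotient.mk (maxIdeal k) a) (redPoly k h) = n →
      n ≤ Multiset.card ((toPoly k h).roots.filter (fun x => ‖x - (a : k)‖ < 1)) := by
  classical
  induction n with
  | zero => intro h _ a _; exact Nat.zero_le _
  | succ n ih =>
    intro h hne a hrm
    have hroot : (redPoly k h).IsRoot (Ideal.Quotient.mk (maxIdeal k) a) :=
      (Polynomial.rootMultiplicity_pos hne).mp (by omega)
    obtain ⟨x, hx, hxa⟩ := exists_root_lt_aux k h hne a hroot
    have hxO : ‖x‖ ≤ 1 := by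
      have h1 : x = (x - (a:k)) + (a:k) := by ring
      rw [h1]
      exact le_trans (IsUltrametricDist.norm_add_le_max _ _) (max_le (le_of_lt hxa) a.2)
    set x' : ringOfIntegers k := ⟨x, hxO⟩ with hx'
    have hxcoe : ((x' : ringOfIntegers k) : k) = x := rfl
    have hevalx : (toPoly k h).eval x = ((h.eval x' : ringOfIntegers k) : k) := by
      rw [toPoly, Polynomial.eval_map]
      exact Polynomial.eval₂_at_apply (ringOfIntegers k).subtype x'
    have hevalO : h.eval x' = 0 := by
      have h2 : ((h.eval x' : ringOfIntegers k) : k) = 0 := by rw [← hevalx]; exact hx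
      exact Subtype.ext (by simpa using h2)
    set h₂ : Polynomial (ringOfIntegers k) := h /ₘ (Polynomial.X - Polynomial.C x') with hh₂
    have hfac : h = (Polynomial.X - Polynomial.C x') * h₂ := by
      conv_lhs => rw [← Polynomial.modByMonic_add_div h (Polynomial.X - Polynomial.C x')]
      rw [Polynomial.modByMonic_X_sub_C_eq_C_eval, hevalO, Polynomial.C_0, zero_add]
    have hmk : Ideal.Quotient.mk (maxIdeal k) x' = Ideal.Quotient.mk (maxIdeal k) a := by
      rw [← sub_eq_zero, ← RingHom.map_sub, mk_eq_zero_iff_aux]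
      simpa using hxa
    have hred : redPoly k h =
        (Polynomial.X - Polynomial.C (Ideal.Quotient.mk (maxIdeal k) a)) * redPoly k h₂ := by
      conv_lhs => rw [hfac]
      rw [redPoly, Polynomial.map_mul, Polynomial.map_sub, Polynomial.map_X,
        Polynomial.map_C, hmk]
      rfl
    have h₂ne : redPoly k h₂ ≠ 0 := by
      intro H; exact hne (by rw [hred, H, mul_zero])
    have hrm₂ : rootMultiplicity (Ideal.Quotient.mk (maxIdeal k) a) (redPoly k h₂) = n := by
      have e : redPoly k h = redPoly k h₂ *
          (Polynomial.X - Polynomial.C (Ideal.Quotient.mk (maxIdeal k) a)) ^ 1 := by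
        rw [pow_one]; exact hred.trans (mul_comm (G := Polynomial (residueField k)) _ _)
      rw [e, Polynomial.rootMultiplicity_mul_X_sub_C_pow h₂ne] at hrm
      omega
    have IH := ih h₂ h₂ne a hrm₂
    have hTfac : toPoly k h = (Polynomial.X - Polynomial.C x) * toPoly k h₂ := by
      conv_lhs => rw [hfac]
      rw [toPoly, Polynomial.map_mul, Polynomial.map_sub, Polynomial.map_X, Polynomial.map_C]
      rfl
    have hTne : toPoly k h ≠ 0 := toPoly_ne_zero_aux k hne
    have hroots : (toPoly k h).roots = x ::ₘ (toPoly k h₂).roots := by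
      rw [hTfac, Polynomial.roots_mul (hTfac ▸ hTne), Polynomial.roots_X_sub_C,
        Multiset.singleton_add]
    rw [hroots, Multiset.filter_cons, if_pos hxa]
    rw [Multiset.card_add, Multiset.card_singleton]
    omega

end OAux

/-- Classical form of the surplus-multiplicity lower bound.  Let `f, g ∈ 𝒪[X]` be coprime in
`k[X]` with reductions `π f, π g` linearly independent over the residue field, and let `H` be
a gcd of `π f` and `π g`.  Then for every `y ∈ k` and `a ∈ 𝒪`, the polynomial `f − y·g` is
nonzero and the number of its roots `x` with `|x − a| < 1`, counted with multiplicity, is at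
least the multiplicity of the residue `ã` as a root of `H`. -/
theorem surplus_multiplicity_lower_bound [IsAlgClosed k] [CompleteSpace k]
    (f g : Polynomial (ringOfIntegers k))
    (hco : IsCoprime (toPoly k f) (toPoly k g))
    (hindep : ∀ a b : residueField k,
      C a * redPoly k f + C b * redPoly k g = 0 → a = 0 ∧ b = 0)
    (H : Polynomial (residueField k))
    (hHf : H ∣ redPoly k f) (hHg : H ∣ redPoly k g)
    (hgcd : ∀ D : Polynomial (residueField k), D ∣ redPoly k f → D ∣ redPoly k g → D ∣ H)
    (y : k) (a : ringOfIntegers k) :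
    toPoly k f - C y * toPoly k g ≠ 0 ∧
    rootMultiplicity (Ideal.Quotient.mk (maxIdeal k) a) H ≤
      Multiset.card ((toPoly k f - C y * toPoly k g).roots.filter
        (fun x => ‖x - (a : k)‖ < 1)) := by
    classical
  have hone : (1 : residueField k) ≠ 0 := by
    intro H1
    have h1m : (1 : ringOfIntegers k) ∈ maxIdeal k := by
      rw [← Ideal.Quotient.eq_zero_iff_mem, map_one]
      exact H1
    have : ‖((1 : ringOfIntegers k) : k)‖ < 1 := h1m
    simp at this
  by_cases hy : ‖y‖ ≤ 1
  · -- `y` is integral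
    set y' : ringOfIntegers k := ⟨y, hy⟩ with hy'
    set h : Polynomial (ringOfIntegers k) := f - Polynomial.C y' * g with hh
    have hred : redPoly k h = redPoly k f -
        Polynomial.C (Ideal.Quotient.mk (maxIdeal k) y') * redPoly k g := by
      rw [hh, redPoly, Polynomial.map_sub, Polynomial.map_mul, Polynomial.map_C]
      rfl
    have hne : redPoly k h ≠ 0 := by
      intro H
      refine hone ?_
      refine (hindep 1 (-(Ideal.Quotient.mk (maxIdeal k) y')) ?_).1
      rw [Polynomial.C_1, one_mul, Polynomial.C_neg, neg_mul, ← sub_eq_add_neg, ← hred, H]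
    have hT : toPoly k h = toPoly k f - Polynomial.C y * toPoly k g := by
      rw [hh, toPoly, Polynomial.map_sub, Polynomial.map_mul, Polynomial.map_C]
      rfl
    have hHd : H ∣ redPoly k h := by
      rw [hred]
      exact dvd_sub hHf (Dvd.dvd.mul_left (α := Polynomial (residueField k)) hHg _)
    have hle : rootMultiplicity (Ideal.Quotient.mk (maxIdeal k) a) H ≤
        rootMultiplicity (Ideal.Quotient.mk (maxIdeal k) a) (redPoly k h) := by
      rw [Polynomial.le_rootMultiplicity_iff hne]
      exact dvd_trans (Polynomial.pow_rootMultiplicity_dvd H _) hHd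
    refine ⟨?_, ?_⟩
    · rw [← hT]; exact toPoly_ne_zero_aux k hne
    · rw [← hT]; exact le_trans hle (core_count_aux k _ h hne a rfl)
  · -- `|y| > 1`; use `1/y`
    push_neg at hy
    have hy0 : y ≠ 0 := by
      intro H; rw [H, norm_zero] at hy; linarith
    have hz1 : ‖y⁻¹‖ ≤ 1 := by
      rw [norm_inv]
      exact inv_le_one_of_one_le₀ (le_of_lt hy)
    set z' : ringOfIntegers k := ⟨y⁻¹, hz1⟩ with hz'
    set h : Polynomial (ringOfIntegers k) := g - Polynomial.C z' * f with hh
    have hred : redPoly k h = redPoly k g -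
        Polynomial.C (Ideal.Quotient.mk (maxIdeal k) z') * redPoly k f := by
      rw [hh, redPoly, Polynomial.map_sub, Polynomial.map_mul, Polynomial.map_C]
      rfl
    have hne : redPoly k h ≠ 0 := by
      intro H
      refine hone ?_
      refine (hindep (-(Ideal.Quotient.mk (maxIdeal k) z')) 1 ?_).2
      rw [Polynomial.C_1, one_mul, Polynomial.C_neg, neg_mul, neg_add_eq_sub, ← hred, H]
    have hTh : toPoly k h = toPoly k g - Polynomial.C y⁻¹ * toPoly k f := by
      rw [hh, toPoly, Polynomial.map_sub, Polynomial.map_mul, Polynomial.map_C]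
      rfl
    have hyy : Polynomial.C y * Polynomial.C y⁻¹ = (1 : Polynomial k) := by
      rw [← Polynomial.C_mul, mul_inv_cancel₀ hy0, Polynomial.C_1]
    have hT : toPoly k f - Polynomial.C y * toPoly k g =
        Polynomial.C (-y) * toPoly k h := by
      rw [hTh, Polynomial.C_neg, neg_mul, mul_sub, ← mul_assoc, hyy, one_mul, neg_sub]
    have hHd : H ∣ redPoly k h := by
      rw [hred]
      exact dvd_sub hHg (Dvd.dvd.mul_left (α := Polynomial (residueField k)) hHf _)
    have hle : rootMultiplicity (Ideal.Quotient.mk (maxIdeal k) a) H ≤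
        rootMultiplicity (Ideal.Quotient.mk (maxIdeal k) a) (redPoly k h) := by
      rw [Polynomial.le_rootMultiplicity_iff hne]
      exact dvd_trans (Polynomial.pow_rootMultiplicity_dvd H _) hHd
    have hThne : toPoly k h ≠ 0 := toPoly_ne_zero_aux k hne
    constructor
    · rw [hT]
      exact mul_ne_zero (Polynomial.C_ne_zero.mpr (neg_ne_zero.mpr hy0)) hThne
    · rw [hT, Polynomial.roots_C_mul _ (neg_ne_zero.mpr hy0)]
      exact le_trans hle (core_count_aux k _ h hne a rfl)
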